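/- If (X,Y) are independent with X ∼ GIG(−λ, αγ₁, γ₂) and Y ∼ GIG(−λ, βγ₂, γ₁), and (U,V) = (Y(1+βXY)/(1+αXY), X(1+αXY)/(1+βXY)), then U and V are independent with U ∼ GIG(−λ, αγ₂, γ₁) and V ∼ GIG(−λ, βγ₁, γ₂). -/

import Mathlib

open MeasureTheory ProbabilityTheory Set
open scoped ENNReal

/-- `μ` is the GIG(l, p, q) distribution on `(0,∞)`: density proportional to
`x^(l−1) e^(−px − q/x)` on `(0,∞)` w.r.t. Lebesgue measure. -/
noncomputable def IsGIG (μ : Measure ℝ) (l p q : ℝ) : Prop :=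
  ∃ C : ℝ, 0 < C ∧
    μ = volume.withDensity fun x =>
      if 0 < x then ENNReal.ofReal (C * x ^ (l - 1) * Real.exp (-(p * x) - q / x))
      else 0

/-! ### Auxiliary material -/

namespace GIGAux

/-- The Letac–Wesołowski transformation. -/
noncomputable def gigT (a b : ℝ) : ℝ × ℝ → ℝ × ℝ := fun p =>
  (p.2 * (1 + b * p.1 * p.2) / (1 + a * p.1 * p.2),
   p.1 * (1 + a * p.1 * p.2) / (1 + b * p.1 * p.2))

lemma gigT_apply (a b x y : ℝ) :
    gigT a b (x, y) = (y * (1 + b * x * y) / (1 + a * x * y),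
      x * (1 + a * x * y) / (1 + b * x * y)) := rfl

lemma gigT_measurable (a b : ℝ) : Measurable (gigT a b) := by
  apply Measurable.prodMk
  · exact (measurable_snd.mul
      (measurable_const.add ((measurable_fst.const_mul b).mul measurable_snd))).div
      (measurable_const.add ((measurable_fst.const_mul a).mul measurable_snd))
  · exact (measurable_fst.mul
      (measurable_const.add ((measurable_fst.const_mul a).mul measurable_snd))).div
      (measurable_const.add ((measurable_fst.const_mul b).mul measurable_snd))

lemma gigT_mem {a b : ℝ} (ha : 0 < a) (hb : 0 < b) {p : ℝ × ℝ}
    (hx : 0 < p.1) (hy : 0 < p.2) :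
    0 < (gigT a b p).1 ∧ 0 < (gigT a b p).2 := by
  obtain ⟨x, y⟩ := p
  simp only at hx hy
  constructor
  · exact div_pos (by positivity) (by positivity)
  · exact div_pos (by positivity) (by positivity)

lemma gigT_invol {a b : ℝ} (ha : 0 < a) (hb : 0 < b) {p : ℝ × ℝ}
    (hx : 0 < p.1) (hy : 0 < p.2) :
    gigT a b (gigT a b p) = p := by
  obtain ⟨x, y⟩ := p
  simp only at hx hy
  have hD : (1 + a * x * y) ≠ 0 := by positivity
  have hN : (1 + b * x * y) ≠ 0 := by positivity
  have hD' : (1 + a * (x * y)) ≠ 0 := by positivity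
  have hN' : (1 + b * (x * y)) ≠ 0 := by positivity
  have huv : (y * (1 + b * x * y) / (1 + a * x * y))
      * (x * (1 + a * x * y) / (1 + b * x * y)) = x * y := by
    field_simp
  have e1 : ∀ c : ℝ, c * (y * (1 + b * x * y) / (1 + a * x * y))
      * (x * (1 + a * x * y) / (1 + b * x * y)) = c * (x * y) := fun c => by
    rw [mul_assoc, huv]
  rw [gigT_apply, gigT_apply]
  simp only [e1]
  rw [Prod.mk.injEq]
  constructor
  · field_simp
  · field_simp

/-- The derivative of the transformation. -/
noncomputable def gigB (a b : ℝ) (p : ℝ × ℝ) : ℝ × ℝ →L[ℝ] ℝ × ℝ :=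
  LinearMap.toContinuousLinearMap (Matrix.toLin (Module.Basis.finTwoProd ℝ) (Module.Basis.finTwoProd ℝ)
    !![p.2 ^ 2 * (b - a) / (1 + a * p.1 * p.2) ^ 2,
        (1 + 2 * b * p.1 * p.2 + a * b * (p.1 * p.2) ^ 2) / (1 + a * p.1 * p.2) ^ 2;
       (1 + 2 * a * p.1 * p.2 + a * b * (p.1 * p.2) ^ 2) / (1 + b * p.1 * p.2) ^ 2,
        p.1 ^ 2 * (a - b) / (1 + b * p.1 * p.2) ^ 2])

lemma gigB_det {a b : ℝ} {p : ℝ × ℝ} (hA : (1 : ℝ) + a * p.1 * p.2 ≠ 0)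
    (hB : (1 : ℝ) + b * p.1 * p.2 ≠ 0) : (gigB a b p).det = -1 := by
  simp only [gigB, LinearMap.det_toContinuousLinearMap, LinearMap.det_toLin,
    Matrix.det_fin_two_of]
  rw [div_mul_div_comm, div_mul_div_comm, ← sub_div,
    div_eq_iff (mul_ne_zero (pow_ne_zero 2 hA) (pow_ne_zero 2 hB))]
  ring

lemma gigT_hasFDerivAt {a b : ℝ} {p : ℝ × ℝ} (hA : (1 : ℝ) + a * p.1 * p.2 ≠ 0)
    (hB : (1 : ℝ) + b * p.1 * p.2 ≠ 0) :
    HasFDerivAt (gigT a b) (gigB a b p) p := by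
  have hDa : HasFDerivAt (fun q : ℝ × ℝ => 1 + a * q.1 * q.2)
      ((a * p.1) • ContinuousLinearMap.snd ℝ ℝ ℝ +
        p.2 • (a • ContinuousLinearMap.fst ℝ ℝ ℝ)) p :=
    (((hasFDerivAt_fst.const_mul a).mul hasFDerivAt_snd).const_add 1)
  have hDb : HasFDerivAt (fun q : ℝ × ℝ => 1 + b * q.1 * q.2)
      ((b * p.1) • ContinuousLinearMap.snd ℝ ℝ ℝ +
        p.2 • (b • ContinuousLinearMap.fst ℝ ℝ ℝ)) p :=
    (((hasFDerivAt_fst.const_mul b).mul hasFDerivAt_snd).const_add 1)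
  have hIa := (hasDerivAt_inv hA).comp_hasFDerivAt p hDa
  have hIb := (hasDerivAt_inv hB).comp_hasFDerivAt p hDb
  have hmain := ((hasFDerivAt_snd.mul hDb).mul hIa).prodMk ((hasFDerivAt_fst.mul hDa).mul hIb)
  refine HasFDerivAt.congr_of_eventuallyEq (hmain.congr_fderiv ?_)
    (Filter.Eventually.of_forall fun q => ?_)
  swap
  · show gigT a b q = _
    simp only [gigT, div_eq_mul_inv, Function.comp, Pi.mul_apply]
  simp only [gigB, Matrix.toLin_finTwoProd_toContinuousLinearMap]
  apply ContinuousLinearMap.ext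
  intro v
  have hA2 : ((1 : ℝ) + a * p.1 * p.2) ^ 2 ≠ 0 := pow_ne_zero _ hA
  have hB2 : ((1 : ℝ) + b * p.1 * p.2) ^ 2 ≠ 0 := pow_ne_zero _ hB
  simp only [ContinuousLinearMap.prod_apply, ContinuousLinearMap.add_apply,
    ContinuousLinearMap.coe_smul', Pi.smul_apply, ContinuousLinearMap.coe_fst',
    ContinuousLinearMap.coe_snd', smul_eq_mul, Prod.mk.injEq, Pi.mul_apply,
    Function.comp_apply]
  constructor
  · field_simp
    ring
  · field_simp
    ring

/-- Key algebraic identity for the GIG densities. -/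
lemma gig_density_id {t a b g1 g2 x y u v : ℝ} (ha : 0 < a) (hb : 0 < b)
    (hx : 0 < x) (hy : 0 < y)
    (hu : u = y * (1 + b * x * y) / (1 + a * x * y))
    (hv : v = x * (1 + a * x * y) / (1 + b * x * y)) :
    u ^ t * Real.exp (-(a * g2 * u) - g1 / u) * (v ^ t * Real.exp (-(b * g1 * v) - g2 / v))
      = x ^ t * Real.exp (-(a * g1 * x) - g2 / x)
        * (y ^ t * Real.exp (-(b * g2 * y) - g1 / y)) := by
  have hD : (0 : ℝ) < 1 + a * x * y := by positivity
  have hN : (0 : ℝ) < 1 + b * x * y := by positivity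
  have hu0 : 0 < u := by rw [hu]; positivity
  have hv0 : 0 < v := by rw [hv]; positivity
  have huv : u * v = x * y := by
    subst hu hv
    field_simp
  have hpow : u ^ t * v ^ t = x ^ t * y ^ t := by
    rw [← Real.mul_rpow hu0.le hv0.le, ← Real.mul_rpow hx.le hy.le, huv]
  have hexp : (-(a * g2 * u) - g1 / u) + (-(b * g1 * v) - g2 / v)
      = (-(a * g1 * x) - g2 / x) + (-(b * g2 * y) - g1 / y) := by
    subst hu hv
    field_simp
    ring
  calc u ^ t * Real.exp (-(a * g2 * u) - g1 / u)
        * (v ^ t * Real.exp (-(b * g1 * v) - g2 / v))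
      = u ^ t * v ^ t * Real.exp ((-(a * g2 * u) - g1 / u) + (-(b * g1 * v) - g2 / v)) := by
        rw [Real.exp_add]; ring
    _ = x ^ t * y ^ t * Real.exp ((-(a * g1 * x) - g2 / x) + (-(b * g2 * y) - g1 / y)) := by
        rw [hpow, hexp]
    _ = x ^ t * Real.exp (-(a * g1 * x) - g2 / x)
        * (y ^ t * Real.exp (-(b * g2 * y) - g1 / y)) := by
        rw [Real.exp_add]; ring

/-- Measurability of GIG-type densities. -/
lemma gig_density_measurable (C c p q : ℝ) :
    Measurable (fun x : ℝ =>
      if 0 < x then ENNReal.ofReal (C * x ^ c * Real.exp (-(p * x) - q / x)) else 0) := by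
  have he : (fun x : ℝ =>
      if 0 < x then ENNReal.ofReal (C * x ^ c * Real.exp (-(p * x) - q / x)) else 0)
      = fun x : ℝ => if 0 < x then
          ENNReal.ofReal (C * Real.exp (Real.log x * c) * Real.exp (-(p * x) - q / x))
        else 0 := by
    funext x
    by_cases hx : 0 < x
    · simp only [hx, if_true, Real.rpow_def_of_pos hx]
    · simp [hx]
  rw [he]
  refine Measurable.ite measurableSet_Ioi ?_ measurable_const
  apply ENNReal.measurable_ofReal.comp
  refine Measurable.mul (Measurable.mul measurable_const ?_) ?_
  · exact Real.measurable_exp.comp (Real.measurable_log.mul_const c)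
  · exact Real.measurable_exp.comp
      (((measurable_id.const_mul p).neg).sub (measurable_const.div measurable_id))

lemma ofReal_mul3 {a b c d : ℝ} (h : a * (b * c) = d) (ha : 0 ≤ a) (hb : 0 ≤ b) :
    ENNReal.ofReal a * (ENNReal.ofReal b * ENNReal.ofReal c) = ENNReal.ofReal d := by
  rw [← ENNReal.ofReal_mul hb, ← ENNReal.ofReal_mul ha, h]

/-- Product of two densities w.r.t. Lebesgue measure. -/
lemma withDensity_prod {f g : ℝ → ℝ≥0∞} (hf : Measurable f) (hg : Measurable g)
    (hf' : ∀ x, f x ≠ ∞) (hg' : ∀ x, g x ≠ ∞) :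
    ((volume : Measure ℝ).withDensity f).prod ((volume : Measure ℝ).withDensity g)
      = ((volume : Measure ℝ).prod volume).withDensity (fun p => f p.1 * g p.2) := by
  haveI : SigmaFinite ((volume : Measure ℝ).withDensity f) :=
    SigmaFinite.withDensity_of_ne_top' hf'
  haveI : SigmaFinite ((volume : Measure ℝ).withDensity g) :=
    SigmaFinite.withDensity_of_ne_top' hg'
  refine Measure.prod_eq (μ := (volume : Measure ℝ).withDensity f)
    (ν := (volume : Measure ℝ).withDensity g) fun s t hs ht => ?_
  rw [withDensity_apply _ (hs.prod ht), ← Measure.prod_restrict,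
    lintegral_prod_mul hf.aemeasurable hg.aemeasurable,
    withDensity_apply _ hs, withDensity_apply _ ht]

end GIGAux

open GIGAux

/-- If `X ∼ GIG(−l, αγ₁, γ₂)` and `Y ∼ GIG(−l, βγ₂, γ₁)` are independent and
`(U,V) = (Y(1+βXY)/(1+αXY), X(1+αXY)/(1+βXY))`, then `U` and `V` are
independent with `U ∼ GIG(−l, αγ₂, γ₁)` and `V ∼ GIG(−l, βγ₁, γ₂)`. -/
theorem gig_independence_preserving
    {Ω : Type*} [MeasurableSpace Ω] (P : Measure Ω) [IsProbabilityMeasure P]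
    (l α β γ₁ γ₂ : ℝ) (hα : 0 < α) (hβ : 0 < β) (hγ₁ : 0 < γ₁) (hγ₂ : 0 < γ₂)
    (X Y : Ω → ℝ) (hX : Measurable X) (hY : Measurable Y)
    (hind : IndepFun X Y P)
    (hXlaw : IsGIG (P.map X) (-l) (α * γ₁) γ₂)
    (hYlaw : IsGIG (P.map Y) (-l) (β * γ₂) γ₁)
    (U V : Ω → ℝ)
    (hU : U = fun ω => Y ω * (1 + β * X ω * Y ω) / (1 + α * X ω * Y ω))
    (hV : V = fun ω => X ω * (1 + α * X ω * Y ω) / (1 + β * X ω * Y ω)) :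
    IndepFun U V P ∧ IsGIG (P.map U) (-l) (α * γ₂) γ₁ ∧
      IsGIG (P.map V) (-l) (β * γ₁) γ₂ := by
  obtain ⟨C₁, hC₁, hX1⟩ := hXlaw
  obtain ⟨C₂, hC₂, hY1⟩ := hYlaw
  -- the densities involved
  set fX : ℝ → ℝ≥0∞ := fun x =>
    if 0 < x then ENNReal.ofReal (C₁ * x ^ (-l - 1) * Real.exp (-(α * γ₁ * x) - γ₂ / x))
    else 0 with hfXdef
  set fY : ℝ → ℝ≥0∞ := fun y =>
    if 0 < y then ENNReal.ofReal (C₂ * y ^ (-l - 1) * Real.exp (-(β * γ₂ * y) - γ₁ / y))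
    else 0 with hfYdef
  set gU : ℝ → ℝ≥0∞ := fun u =>
    if 0 < u then ENNReal.ofReal (1 * u ^ (-l - 1) * Real.exp (-(α * γ₂ * u) - γ₁ / u))
    else 0 with hgUdef
  set gV : ℝ → ℝ≥0∞ := fun v =>
    if 0 < v then ENNReal.ofReal (1 * v ^ (-l - 1) * Real.exp (-(β * γ₁ * v) - γ₂ / v))
    else 0 with hgVdef
  set k : ℝ≥0∞ := ENNReal.ofReal (C₁ * C₂) with hkdef
  set H : ℝ × ℝ → ℝ≥0∞ := fun q => k * (gU q.1 * gV q.2) with hHdef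
  have hfXm : Measurable fX := gig_density_measurable C₁ (-l - 1) (α * γ₁) γ₂
  have hfYm : Measurable fY := gig_density_measurable C₂ (-l - 1) (β * γ₂) γ₁
  have hgUm : Measurable gU := gig_density_measurable 1 (-l - 1) (α * γ₂) γ₁
  have hgVm : Measurable gV := gig_density_measurable 1 (-l - 1) (β * γ₁) γ₂
  have hfXt : ∀ x, fX x ≠ ∞ := fun x => by
    by_cases hx : 0 < x <;> simp [hfXdef, hx]
  have hfYt : ∀ x, fY x ≠ ∞ := fun x => by
    by_cases hx : 0 < x <;> simp [hfYdef, hx]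
  have hgUt : ∀ x, gU x ≠ ∞ := fun x => by
    by_cases hx : 0 < x <;> simp [hgUdef, hx]
  have hgVt : ∀ x, gV x ≠ ∞ := fun x => by
    by_cases hx : 0 < x <;> simp [hgVdef, hx]
  -- measurability of U and V
  have hUm : Measurable U := by
    rw [hU]
    exact (hY.mul (measurable_const.add ((hX.const_mul β).mul hY))).div
      (measurable_const.add ((hX.const_mul α).mul hY))
  have hVm : Measurable V := by
    rw [hV]
    exact (hX.mul (measurable_const.add ((hX.const_mul α).mul hY))).div
      (measurable_const.add ((hX.const_mul β).mul hY))
  -- the joint law of (X, Y)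
  have hmapXY : P.map (fun ω => (X ω, Y ω)) = (P.map X).prod (P.map Y) :=
    (indepFun_iff_map_prod_eq_prod_map_map hX.aemeasurable hY.aemeasurable).1 hind
  have hprodXY : (P.map X).prod (P.map Y)
      = ((volume : Measure ℝ).prod volume).withDensity (fun p => fX p.1 * fY p.2) := by
    rw [hX1, hY1]
    exact withDensity_prod hfXm hfYm hfXt hfYt
  -- (U, V) is the image of (X, Y) under the transformation
  have hUV : (fun ω => (U ω, V ω)) = (gigT α β) ∘ (fun ω => (X ω, Y ω)) := by
    rw [hU, hV]
    rfl
  have hTm := gigT_measurable α β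
  have hmapUV0 : P.map (fun ω => (U ω, V ω))
      = (((volume : Measure ℝ).prod volume).withDensity
        (fun p => fX p.1 * fY p.2)).map (gigT α β) := by
    rw [hUV, ← Measure.map_map hTm (hX.prodMk hY), hmapXY, hprodXY]
  -- change of variables
  set Q : Set (ℝ × ℝ) := Ioi 0 ×ˢ Ioi 0 with hQdef
  have hQ : MeasurableSet Q := measurableSet_Ioi.prod measurableSet_Ioi
  have hQmem : ∀ p : ℝ × ℝ, p ∈ Q ↔ 0 < p.1 ∧ 0 < p.2 := fun p => Iff.rfl
  have hFQ : ∀ p : ℝ × ℝ, p ∉ Q → fX p.1 * fY p.2 = 0 := by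
    intro p hp
    rw [hQmem, not_and_or] at hp
    rcases hp with hp | hp
    · simp [hfXdef, hp]
    · simp [hfYdef, hp]
  have hHQ : ∀ p : ℝ × ℝ, p ∉ Q → H p = 0 := by
    intro p hp
    rw [hQmem, not_and_or] at hp
    rcases hp with hp | hp
    · simp [hHdef, hgUdef, hp]
    · simp [hHdef, hgVdef, hp]
  -- the pointwise density identity
  have hFH : ∀ p ∈ Q, ENNReal.ofReal |(gigB α β p).det| * H (gigT α β p)
      = fX p.1 * fY p.2 := by
    rintro ⟨x, y⟩ hp
    obtain ⟨hx, hy⟩ := (hQmem _).1 hp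
    simp only at hx hy
    have hD : (0 : ℝ) < 1 + α * x * y := by positivity
    have hN : (0 : ℝ) < 1 + β * x * y := by positivity
    have hdet : (gigB α β (x, y)).det = -1 := gigB_det hD.ne' hN.ne'
    rw [hdet]
    have habs : |(-1 : ℝ)| = 1 := by norm_num
    rw [habs, ENNReal.ofReal_one, one_mul]
    set u : ℝ := y * (1 + β * x * y) / (1 + α * x * y) with hud
    set v : ℝ := x * (1 + α * x * y) / (1 + β * x * y) with hvd
    have hu0 : 0 < u := by rw [hud]; positivity
    have hv0 : 0 < v := by rw [hvd]; positivity
    have hTp : gigT α β (x, y) = (u, v) := rfl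
    rw [hTp]
    simp only [hHdef, hgUdef, hgVdef, hfXdef, hfYdef, hkdef]
    rw [if_pos hu0, if_pos hv0, if_pos hx, if_pos hy]
    have hid := gig_density_id (t := -l - 1) (g1 := γ₁) (g2 := γ₂)
      hα hβ hx hy hud hvd
    have e1 : C₁ * C₂ * ((1 * u ^ (-l - 1) * Real.exp (-(α * γ₂ * u) - γ₁ / u))
          * (1 * v ^ (-l - 1) * Real.exp (-(β * γ₁ * v) - γ₂ / v)))
        = (C₁ * x ^ (-l - 1) * Real.exp (-(α * γ₁ * x) - γ₂ / x))
          * (C₂ * y ^ (-l - 1) * Real.exp (-(β * γ₂ * y) - γ₁ / y)) := by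
      simp only [one_mul]
      rw [hid]
      ring
    rw [ofReal_mul3 e1 (by positivity) (by positivity)]
    exact ENNReal.ofReal_mul (by positivity)
  -- the change-of-variables computation
  have key : (((volume : Measure ℝ).prod volume).withDensity
      (fun p => fX p.1 * fY p.2)).map (gigT α β)
      = ((volume : Measure ℝ).prod volume).withDensity H := by
    ext A hA
    rw [Measure.map_apply hTm hA, withDensity_apply _ (hTm hA), withDensity_apply _ hA]
    set s : Set (ℝ × ℝ) := gigT α β ⁻¹' A ∩ Q with hsdef
    have hs : MeasurableSet s := (hTm hA).inter hQ
    have hsubQ : s ⊆ Q := inter_subset_right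
    have hinj : InjOn (gigT α β) s := by
      intro p hp q hq h
      have hp' := (hQmem _).1 (hsubQ hp)
      have hq' := (hQmem _).1 (hsubQ hq)
      calc p = gigT α β (gigT α β p) := (gigT_invol hα hβ hp'.1 hp'.2).symm
        _ = gigT α β (gigT α β q) := by rw [h]
        _ = q := gigT_invol hα hβ hq'.1 hq'.2
    have himg : gigT α β '' s = A ∩ Q := by
      ext q
      constructor
      · rintro ⟨p, ⟨hpA, hpQ⟩, rfl⟩
        have h' := (hQmem _).1 hpQ
        exact ⟨hpA, (hQmem _).2 (gigT_mem hα hβ h'.1 h'.2)⟩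
      · rintro ⟨hqA, hqQ⟩
        have h' := (hQmem _).1 hqQ
        refine ⟨gigT α β q, ⟨?_, (hQmem _).2 (gigT_mem hα hβ h'.1 h'.2)⟩,
          gigT_invol hα hβ h'.1 h'.2⟩
        show gigT α β (gigT α β q) ∈ A
        rw [gigT_invol hα hβ h'.1 h'.2]
        exact hqA
    have hf' : ∀ p ∈ s, HasFDerivWithinAt (gigT α β) (gigB α β p) s p := by
      intro p hp
      have h' := (hQmem _).1 (hsubQ hp)
      have hx := h'.1
      have hy := h'.2
      exact (gigT_hasFDerivAt (by positivity) (by positivity)).hasFDerivWithinAt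
    have hCoV := lintegral_image_eq_lintegral_abs_det_fderiv_mul
      ((volume : Measure ℝ).prod volume) hs hf' hinj H
    rw [himg] at hCoV
    -- reduce both sides to integrals over `s` resp. `A ∩ Q`
    have hsuppF : Function.support (fun p : ℝ × ℝ => fX p.1 * fY p.2) ⊆ Q := by
      intro p hp
      by_contra h
      exact hp (hFQ p h)
    have hsuppH : Function.support H ⊆ Q := by
      intro p hp
      by_contra h
      exact hp (hHQ p h)
    have hleft : ∫⁻ p in gigT α β ⁻¹' A, fX p.1 * fY p.2
          ∂((volume : Measure ℝ).prod volume)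
        = ∫⁻ p in s, fX p.1 * fY p.2 ∂((volume : Measure ℝ).prod volume) := by
      rw [hsdef, Set.inter_comm, ← Measure.restrict_restrict hQ]
      exact (setLIntegral_eq_of_support_subset hsuppF).symm
    have hright : ∫⁻ p in A, H p ∂((volume : Measure ℝ).prod volume)
        = ∫⁻ p in A ∩ Q, H p ∂((volume : Measure ℝ).prod volume) := by
      rw [Set.inter_comm, ← Measure.restrict_restrict hQ]
      exact (setLIntegral_eq_of_support_subset hsuppH).symm
    rw [hleft, hright, hCoV]
    refine setLIntegral_congr_fun hs ?_
    intro p hp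
    exact (hFH p (hsubQ hp)).symm
  have hmapUV : P.map (fun ω => (U ω, V ω))
      = ((volume : Measure ℝ).prod volume).withDensity H := by
    rw [hmapUV0, key]
  -- total mass computation
  haveI : IsProbabilityMeasure (P.map (fun ω => (U ω, V ω))) :=
    Measure.isProbabilityMeasure_map (hUm.prodMk hVm).aemeasurable
  set IU : ℝ≥0∞ := ∫⁻ u, gU u with hIUdef
  set IV : ℝ≥0∞ := ∫⁻ v, gV v with hIVdef
  have hmass : k * (IU * IV) = 1 := by
    have h1 : (P.map (fun ω => (U ω, V ω))) univ = 1 := measure_univ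
    rw [hmapUV] at h1
    rw [withDensity_apply _ MeasurableSet.univ, Measure.restrict_univ] at h1
    rw [← h1, hHdef]
    rw [lintegral_const_mul' _ _ ENNReal.ofReal_ne_top,
      lintegral_prod_mul hgUm.aemeasurable hgVm.aemeasurable]
  have hk0 : k ≠ 0 := by
    rw [hkdef]
    simp only [ne_eq, ENNReal.ofReal_eq_zero, not_le]
    positivity
  have hkt : k ≠ ∞ := ENNReal.ofReal_ne_top
  have hIU0 : IU ≠ 0 := by
    intro h
    rw [h, zero_mul, mul_zero] at hmass
    exact zero_ne_one hmass
  have hIV0 : IV ≠ 0 := by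
    intro h
    rw [h, mul_zero, mul_zero] at hmass
    exact zero_ne_one hmass
  have hIUt : IU ≠ ∞ := by
    intro h
    rw [h, ENNReal.top_mul hIV0, ENNReal.mul_top hk0] at hmass
    exact (ENNReal.top_ne_one) hmass
  have hIVt : IV ≠ ∞ := by
    intro h
    rw [h, ENNReal.mul_top hIU0, ENNReal.mul_top hk0] at hmass
    exact (ENNReal.top_ne_one) hmass
  -- marginals
  have hmapU : P.map U = (volume : Measure ℝ).withDensity (fun u => (k * IV) * gU u) := by
    have hUfst : U = Prod.fst ∘ (fun ω => (U ω, V ω)) := rfl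
    rw [hUfst, ← Measure.map_map measurable_fst (hUm.prodMk hVm), hmapUV]
    ext A hA
    rw [Measure.map_apply measurable_fst hA, withDensity_apply _ (measurable_fst hA),
      withDensity_apply _ hA]
    have hpre : Prod.fst ⁻¹' A = A ×ˢ (univ : Set ℝ) := by
      ext p; simp [Set.mem_prod]
    rw [hpre]
    calc ∫⁻ p in A ×ˢ (univ : Set ℝ), H p ∂((volume : Measure ℝ).prod volume)
        = k * ∫⁻ p in A ×ˢ (univ : Set ℝ), gU p.1 * gV p.2
            ∂((volume : Measure ℝ).prod volume) := by
          rw [hHdef]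
          exact lintegral_const_mul' _ _ hkt
      _ = k * ((∫⁻ u in A, gU u) * IV) := by
          rw [← Measure.prod_restrict,
            lintegral_prod_mul hgUm.aemeasurable hgVm.aemeasurable,
            Measure.restrict_univ, hIVdef]
      _ = ∫⁻ u in A, (k * IV) * gU u := by
          rw [lintegral_const_mul' _ _ (ENNReal.mul_ne_top hkt hIVt)]
          ring
  have hmapV : P.map V = (volume : Measure ℝ).withDensity (fun v => (k * IU) * gV v) := by
    have hVsnd : V = Prod.snd ∘ (fun ω => (U ω, V ω)) := rfl
    rw [hVsnd, ← Measure.map_map measurable_snd (hUm.prodMk hVm), hmapUV]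
    ext A hA
    rw [Measure.map_apply measurable_snd hA, withDensity_apply _ (measurable_snd hA),
      withDensity_apply _ hA]
    have hpre : Prod.snd ⁻¹' A = (univ : Set ℝ) ×ˢ A := by
      ext p; simp [Set.mem_prod]
    rw [hpre]
    calc ∫⁻ p in (univ : Set ℝ) ×ˢ A, H p ∂((volume : Measure ℝ).prod volume)
        = k * ∫⁻ p in (univ : Set ℝ) ×ˢ A, gU p.1 * gV p.2
            ∂((volume : Measure ℝ).prod volume) := by
          rw [hHdef]
          exact lintegral_const_mul' _ _ hkt
      _ = k * (IU * ∫⁻ v in A, gV v) := by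
          rw [← Measure.prod_restrict,
            lintegral_prod_mul hgUm.aemeasurable hgVm.aemeasurable,
            Measure.restrict_univ, hIUdef]
      _ = ∫⁻ v in A, (k * IU) * gV v := by
          rw [lintegral_const_mul' _ _ (ENNReal.mul_ne_top hkt hIUt)]
          ring
  -- conclusions
  refine ⟨?_, ?_, ?_⟩
  · -- independence
    rw [indepFun_iff_map_prod_eq_prod_map_map hUm.aemeasurable hVm.aemeasurable,
      hmapUV, hmapU, hmapV,
      withDensity_prod (hgUm.const_mul _) (hgVm.const_mul _)
        (fun x => ENNReal.mul_ne_top (ENNReal.mul_ne_top hkt hIVt) (hgUt x))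
        (fun x => ENNReal.mul_ne_top (ENNReal.mul_ne_top hkt hIUt) (hgVt x))]
    congr 1
    funext p
    have : (k * IV) * gU p.1 * ((k * IU) * gV p.2)
        = (k * (IU * IV)) * (k * (gU p.1 * gV p.2)) := by ring
    rw [hHdef]
    show k * (gU p.1 * gV p.2) = (k * IV) * gU p.1 * ((k * IU) * gV p.2)
    rw [this, hmass, one_mul]
  · -- law of U
    have hIVr : 0 < IV.toReal := ENNReal.toReal_pos hIV0 hIVt
    refine ⟨C₁ * C₂ * IV.toReal, by positivity, ?_⟩
    rw [hmapU]
    congr 1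
    funext u
    by_cases hu : 0 < u
    · simp only [hgUdef, hkdef]
      rw [if_pos hu, if_pos hu]
      have hkv : ENNReal.ofReal (C₁ * C₂) * IV
          = ENNReal.ofReal (C₁ * C₂ * IV.toReal) := by
        rw [ENNReal.ofReal_mul (show (0:ℝ) ≤ C₁ * C₂ by positivity),
          ENNReal.ofReal_toReal hIVt]
      rw [hkv, ← ENNReal.ofReal_mul (show (0:ℝ) ≤ C₁ * C₂ * IV.toReal by positivity)]
      congr 1
      rw [one_mul]
      ring
    · simp only [hgUdef, hkdef]
      rw [if_neg hu, if_neg hu, mul_zero]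
  · -- law of V
    have hIUr : 0 < IU.toReal := ENNReal.toReal_pos hIU0 hIUt
    refine ⟨C₁ * C₂ * IU.toReal, by positivity, ?_⟩
    rw [hmapV]
    congr 1
    funext v
    by_cases hv : 0 < v
    · simp only [hgVdef, hkdef]
      rw [if_pos hv, if_pos hv]
      have hku : ENNReal.ofReal (C₁ * C₂) * IU
          = ENNReal.ofReal (C₁ * C₂ * IU.toReal) := by
        rw [ENNReal.ofReal_mul (show (0:ℝ) ≤ C₁ * C₂ by positivity),
          ENNReal.ofReal_toReal hIUt]
      rw [hku, ← ENNReal.ofReal_mul (show (0:ℝ) ≤ C₁ * C₂ * IU.toReal by positivity)]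
      congr 1
      rw [one_mul]
      ring
    · simp only [hgVdef, hkdef]
      rw [if_neg hv, if_neg hv, mul_zero]
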